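/- arXiv:2106.00303 — 4 statements merged into one kernel-verified Lean document; each statement's English description precedes it below -/
import Mathlib

section
/- Let n ≥ 1 be an integer and let μ be a Radon measure on ℝ^{n+1} which is n-AD-regular at all scales: there are 0 < c₁ ≤ c₂ with c₁ r^n ≤ μ(B(x,r)) ≤ c₂ r^n for all x ∈ supp μ and all r > 0. Then there is a constant M, depending only on n, c₁ and c₂, such that 𝔼(μ|_B) ≤ M r(B)^{3/4} θ_μ(2B)² μ(2B) for every ball B ⊂ ℝ^{n+1}. -/
open MeasureTheory Metric Set ENNReal

noncomputable section

/-- The (topological) support of a measure on a metric space: the set of points all of whose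
balls have positive measure. -/
def measSupport {X : Type*} [PseudoMetricSpace X] [MeasurableSpace X]
    (μ : Measure X) : Set X :=
  {x | ∀ r : ℝ, 0 < r → 0 < μ (ball x r)}

/-- The `n`-dimensional density `θ_μ(x,r) = μ(B(x,r))/rⁿ`. -/
def ballDensity (n : ℕ) (μ : Measure (EuclideanSpace ℝ (Fin (n + 1))))
    (x : EuclideanSpace ℝ (Fin (n + 1))) (r : ℝ) : ℝ≥0∞ :=
  μ (ball x r) / ENNReal.ofReal (r ^ n)

/-- The Wolff-type energy with parameter `a`:
`𝔼^{(a)}(μ) = ∫∫₀^∞ ( μ(B(x,r))/r^{n−a/2} )² (dr/r) dμ(x)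
            = ∫∫₀^∞ r^a θ_μ(x,r)² (dr/r) dμ(x)`.
For `a = 3/4` this is the energy `𝔼(μ)` of the paper. -/
def wolffEnergy (n : ℕ) (a : ℝ) (μ : Measure (EuclideanSpace ℝ (Fin (n + 1)))) : ℝ≥0∞ :=
  ∫⁻ x, (∫⁻ r in Ioi (0 : ℝ),
      (μ (ball x r) / ENNReal.ofReal (r ^ ((n : ℝ) - a / 2))) ^ 2 * (ENNReal.ofReal r)⁻¹) ∂μ

lemma measure_compl_measSupport {X : Type*} [PseudoMetricSpace X] [SecondCountableTopology X]
    [MeasurableSpace X] (μ : Measure X) :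
    μ (measSupport μ)ᶜ = 0 := by
  have h : ∀ x : ((measSupport μ)ᶜ : Set X), ∃ r : ℝ, 0 < r ∧ μ (ball (x : X) r) = 0 := by
    rintro ⟨x, hx⟩
    simp only [measSupport, mem_compl_iff, mem_setOf_eq] at hx
    push_neg at hx
    obtain ⟨r, hr, h0⟩ := hx
    exact ⟨r, hr, le_antisymm h0 zero_le⟩
  choose r hr h0 using h
  obtain ⟨T, hTc, hT⟩ := TopologicalSpace.isOpen_iUnion_countable
      (fun x : ((measSupport μ)ᶜ : Set X) => ball (x : X) (r x)) (fun _ => isOpen_ball)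
  have hsub : (measSupport μ)ᶜ ⊆ ⋃ i ∈ T, ball (i : X) (r i) := by
    rw [hT]
    intro x hx
    exact mem_iUnion.2 ⟨⟨x, hx⟩, mem_ball_self (hr _)⟩
  refine le_antisymm ?_ zero_le
  calc μ (measSupport μ)ᶜ ≤ μ (⋃ i ∈ T, ball (i : X) (r i)) := measure_mono hsub
    _ = 0 := (measure_biUnion_null_iff hTc).2 fun i _ => h0 i

/-- **Remark 1.3 of Dąbrowski–Tolsa:** if `μ` is `n`-AD-regular at all scales, then it
satisfies the subcritical Wolff energy condition
`𝔼(μ|_B) ≤ M r(B)^{3/4} θ_μ(2B)² μ(2B)` for every ball `B`, with `M` depending only on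
`n` and the AD-regularity constants. -/
theorem statement_7 (n : ℕ) (hn : 1 ≤ n) (c₁ c₂ : ℝ) (hc₁ : 0 < c₁) (hc₁₂ : c₁ ≤ c₂) :
    ∃ M : ℝ, 0 < M ∧
      ∀ (μ : Measure (EuclideanSpace ℝ (Fin (n + 1)))),
        IsLocallyFiniteMeasure μ →
        (∀ x ∈ measSupport μ, ∀ r : ℝ, 0 < r →
            ENNReal.ofReal (c₁ * r ^ n) ≤ μ (ball x r) ∧
            μ (ball x r) ≤ ENNReal.ofReal (c₂ * r ^ n)) →
        ∀ (z : EuclideanSpace ℝ (Fin (n + 1))) (ρ : ℝ), 0 < ρ →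
          wolffEnergy n (3 / 4) (μ.restrict (ball z ρ)) ≤
            ENNReal.ofReal (M * ρ ^ ((3 : ℝ) / 4)) *
              ballDensity n μ z (2 * ρ) ^ 2 * μ (ball z (2 * ρ)) := by
  have hc₂ : 0 < c₂ := lt_of_lt_of_le hc₁ hc₁₂
  set K : ℝ := c₂ ^ 2 * (4 / 3 + 4 ^ n) with hKdef
  have hKpos : 0 < K := by positivity
  have h4 : (4:ℝ) ^ n = (2 ^ n) ^ 2 := by
    rw [show (4:ℝ) = 2 ^ 2 by norm_num, ← pow_mul, mul_comm, pow_mul]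
  refine ⟨K * 4 ^ n / c₁ ^ 2, by positivity, ?_⟩
  intro μ hloc hreg z ρ hρ
  by_cases hμB : μ (ball z ρ) = 0
  · have hz : μ.restrict (ball z ρ) = 0 := Measure.restrict_eq_zero.2 hμB
    rw [wolffEnergy, hz]
    simp
  -- a point of the support inside the ball
  have hcompl := measure_compl_measSupport μ
  have hkey : μ (ball z ρ ∩ measSupport μ) ≠ 0 := by
    intro h0
    apply hμB
    have hsub : ball z ρ ⊆ (ball z ρ ∩ measSupport μ) ∪ (measSupport μ)ᶜ := by
      intro x hx
      by_cases hxs : x ∈ measSupport μ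
      · exact Or.inl ⟨hx, hxs⟩
      · exact Or.inr hxs
    have := (measure_mono hsub).trans (measure_union_le (μ := μ) _ _)
    rw [h0, hcompl, add_zero] at this
    exact le_antisymm this zero_le
  obtain ⟨x₀, hx₀b, hx₀s⟩ := nonempty_of_measure_ne_zero hkey
  -- lower bound on μ(2B)
  have hlow : ENNReal.ofReal (c₁ * ρ ^ n) ≤ μ (ball z (2 * ρ)) := by
    refine le_trans (hreg x₀ hx₀s ρ hρ).1 (measure_mono (ball_subset_ball' ?_))
    have := (mem_ball.1 hx₀b)
    linarith
  -- lower bound on the density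
  have hθ : ENNReal.ofReal (c₁ / 2 ^ n) ≤ ballDensity n μ z (2 * ρ) := by
    rw [ballDensity]
    have h2 : (0:ℝ) < (2 * ρ) ^ n := by positivity
    have heq : ENNReal.ofReal (c₁ / 2 ^ n)
        = ENNReal.ofReal (c₁ * ρ ^ n) / ENNReal.ofReal ((2 * ρ) ^ n) := by
      rw [← ENNReal.ofReal_div_of_pos h2]
      congr 1
      rw [mul_pow]
      field_simp
    rw [heq]
    exact ENNReal.div_le_div_right hlow _
  -- main estimate
  have hmain : wolffEnergy n (3 / 4) (μ.restrict (ball z ρ)) ≤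
      ENNReal.ofReal (K * ρ ^ ((3:ℝ)/4)) * μ (ball z (2 * ρ)) := by
    rw [wolffEnergy]
    have hsupp_ae : ∀ᵐ x ∂μ, x ∈ measSupport μ := by
      rw [ae_iff]
      exact hcompl
    have hae : ∀ᵐ x ∂(μ.restrict (ball z ρ)),
        (∫⁻ r in Ioi (0 : ℝ),
          (μ.restrict (ball z ρ) (ball x r) /
            ENNReal.ofReal (r ^ ((n : ℝ) - 3 / 4 / 2))) ^ 2 * (ENNReal.ofReal r)⁻¹)
          ≤ ENNReal.ofReal (K * ρ ^ ((3:ℝ)/4)) := by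
      filter_upwards [ae_restrict_mem measurableSet_ball, ae_restrict_of_ae hsupp_ae]
        with x hxb hxs
      -- split the inner integral
      rw [← Ioc_union_Ioi_eq_Ioi hρ.le,
        lintegral_union measurableSet_Ioi (Ioc_disjoint_Ioi le_rfl)]
      have hpiece1 : (∫⁻ r in Ioc (0:ℝ) ρ,
          (μ.restrict (ball z ρ) (ball x r) /
            ENNReal.ofReal (r ^ ((n : ℝ) - 3 / 4 / 2))) ^ 2 * (ENNReal.ofReal r)⁻¹)
          ≤ ENNReal.ofReal (c₂ ^ 2 * (4/3) * ρ ^ ((3:ℝ)/4)) := by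
        have hb : ∀ r ∈ Ioc (0:ℝ) ρ,
            (μ.restrict (ball z ρ) (ball x r) /
              ENNReal.ofReal (r ^ ((n : ℝ) - 3 / 4 / 2))) ^ 2 * (ENNReal.ofReal r)⁻¹
            ≤ ENNReal.ofReal (c₂ ^ 2 * r ^ (-(1:ℝ)/4)) := by
          intro r hrm
          have hr0 : 0 < r := hrm.1
          have hre : (0:ℝ) < r ^ ((n : ℝ) - 3 / 4 / 2) := Real.rpow_pos_of_pos hr0 _
          have hupper : μ.restrict (ball z ρ) (ball x r) ≤ ENNReal.ofReal (c₂ * r ^ n) :=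
            le_trans (Measure.restrict_le_self _) (hreg x hxs r hr0).2
          calc (μ.restrict (ball z ρ) (ball x r) /
              ENNReal.ofReal (r ^ ((n : ℝ) - 3 / 4 / 2))) ^ 2 * (ENNReal.ofReal r)⁻¹
              ≤ (ENNReal.ofReal (c₂ * r ^ n) /
                ENNReal.ofReal (r ^ ((n : ℝ) - 3 / 4 / 2))) ^ 2 * (ENNReal.ofReal r)⁻¹ := by
                gcongr
            _ = ENNReal.ofReal ((c₂ * r ^ n / r ^ ((n : ℝ) - 3 / 4 / 2)) ^ 2 * r⁻¹) := by
                rw [show ENNReal.ofReal ((c₂ * r ^ n / r ^ ((n : ℝ) - 3 / 4 / 2)) ^ 2 * r⁻¹)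
                    = (ENNReal.ofReal (c₂ * r ^ n) / ENNReal.ofReal (r ^ ((n : ℝ) - 3 / 4 / 2))) ^ 2
                      * (ENNReal.ofReal r)⁻¹ from by
                  rw [ENNReal.ofReal_mul (by positivity), ENNReal.ofReal_pow (by positivity),
                    ENNReal.ofReal_div_of_pos hre, ENNReal.ofReal_inv_of_pos hr0]]
            _ = ENNReal.ofReal (c₂ ^ 2 * r ^ (-(1:ℝ)/4)) := by
                congr 1
                have key : r ^ (-(1:ℝ)/4) = r ^ ((n:ℝ)) * r ^ ((n:ℝ)) *
                    (r ^ ((n:ℝ) - 3/4/2))⁻¹ * (r ^ ((n:ℝ) - 3/4/2))⁻¹ * r⁻¹ := by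
                  rw [← Real.rpow_neg hr0.le, ← Real.rpow_neg_one r,
                    ← Real.rpow_add hr0, ← Real.rpow_add hr0, ← Real.rpow_add hr0,
                    ← Real.rpow_add hr0]
                  congr 1
                  ring
                rw [key, div_eq_mul_inv,
                  show (r:ℝ) ^ (n:ℕ) = r ^ ((n:ℝ)) from (Real.rpow_natCast r n).symm]
                ring
        have hint : IntegrableOn (fun r : ℝ => c₂ ^ 2 * r ^ (-(1:ℝ)/4)) (Ioc 0 ρ) := by
          refine (intervalIntegrable_iff_integrableOn_Ioc_of_le hρ.le).1 ?_
          exact (intervalIntegral.intervalIntegrable_rpow' (by norm_num)).const_mul _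
        have hnn : 0 ≤ᵐ[volume.restrict (Ioc (0:ℝ) ρ)]
            fun r : ℝ => c₂ ^ 2 * r ^ (-(1:ℝ)/4) := by
          refine (ae_restrict_iff' measurableSet_Ioc).2 (Filter.Eventually.of_forall ?_)
          intro r hrm
          exact mul_nonneg (by positivity) (Real.rpow_nonneg hrm.1.le _)
        calc (∫⁻ r in Ioc (0:ℝ) ρ, _) ≤ ∫⁻ r in Ioc (0:ℝ) ρ,
              ENNReal.ofReal (c₂ ^ 2 * r ^ (-(1:ℝ)/4)) :=
            setLIntegral_mono' measurableSet_Ioc hb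
          _ = ENNReal.ofReal (∫ r in Ioc (0:ℝ) ρ, c₂ ^ 2 * r ^ (-(1:ℝ)/4)) :=
            (ofReal_integral_eq_lintegral_ofReal hint hnn).symm
          _ = ENNReal.ofReal (c₂ ^ 2 * (4/3) * ρ ^ ((3:ℝ)/4)) := by
            congr 1
            rw [integral_const_mul, ← intervalIntegral.integral_of_le hρ.le,
              integral_rpow (Or.inl (by norm_num))]
            rw [show (-(1:ℝ)/4 + 1) = 3/4 by norm_num, Real.zero_rpow (by norm_num)]
            ring
      have hpiece2 : (∫⁻ r in Ioi ρ,
          (μ.restrict (ball z ρ) (ball x r) /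
            ENNReal.ofReal (r ^ ((n : ℝ) - 3 / 4 / 2))) ^ 2 * (ENNReal.ofReal r)⁻¹)
          ≤ ENNReal.ofReal (c₂ ^ 2 * 4 ^ n * ρ ^ ((3:ℝ)/4)) := by
        have hup2 : ∀ r : ℝ, μ.restrict (ball z ρ) (ball x r)
            ≤ ENNReal.ofReal (c₂ * (2 * ρ) ^ n) := by
          intro r
          calc μ.restrict (ball z ρ) (ball x r) ≤ μ.restrict (ball z ρ) univ :=
              measure_mono (subset_univ _)
            _ = μ (ball z ρ) := Measure.restrict_apply_univ _
            _ ≤ μ (ball x (2 * ρ)) := by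
              refine measure_mono (ball_subset_ball' ?_)
              have := mem_ball.1 hxb
              rw [dist_comm]
              linarith
            _ ≤ ENNReal.ofReal (c₂ * (2 * ρ) ^ n) := (hreg x hxs (2 * ρ) (by linarith)).2
        set s : ℝ := -(2*(n:ℝ)) - 1/4 with hsdef
        have hs : s < -1 := by
          have hn1 : (1:ℝ) ≤ (n:ℝ) := by exact_mod_cast hn
          rw [hsdef]
          linarith
        have hb : ∀ r ∈ Ioi ρ,
            (μ.restrict (ball z ρ) (ball x r) /
              ENNReal.ofReal (r ^ ((n : ℝ) - 3 / 4 / 2))) ^ 2 * (ENNReal.ofReal r)⁻¹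
            ≤ ENNReal.ofReal ((c₂ * (2 * ρ) ^ n) ^ 2 * r ^ s) := by
          intro r hrm
          have hr0 : 0 < r := hρ.trans hrm
          have hre : (0:ℝ) < r ^ ((n : ℝ) - 3 / 4 / 2) := Real.rpow_pos_of_pos hr0 _
          calc (μ.restrict (ball z ρ) (ball x r) /
              ENNReal.ofReal (r ^ ((n : ℝ) - 3 / 4 / 2))) ^ 2 * (ENNReal.ofReal r)⁻¹
              ≤ (ENNReal.ofReal (c₂ * (2 * ρ) ^ n) /
                ENNReal.ofReal (r ^ ((n : ℝ) - 3 / 4 / 2))) ^ 2 * (ENNReal.ofReal r)⁻¹ := by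
                gcongr
                exact hup2 r
            _ = ENNReal.ofReal ((c₂ * (2 * ρ) ^ n / r ^ ((n : ℝ) - 3 / 4 / 2)) ^ 2 * r⁻¹) := by
                rw [show ENNReal.ofReal ((c₂ * (2 * ρ) ^ n / r ^ ((n : ℝ) - 3 / 4 / 2)) ^ 2 * r⁻¹)
                    = (ENNReal.ofReal (c₂ * (2 * ρ) ^ n) / ENNReal.ofReal (r ^ ((n : ℝ) - 3 / 4 / 2))) ^ 2
                      * (ENNReal.ofReal r)⁻¹ from by
                  rw [ENNReal.ofReal_mul (by positivity), ENNReal.ofReal_pow (by positivity),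
                    ENNReal.ofReal_div_of_pos hre, ENNReal.ofReal_inv_of_pos hr0]]
            _ = ENNReal.ofReal ((c₂ * (2 * ρ) ^ n) ^ 2 * r ^ s) := by
                congr 1
                have key : r ^ s = (r ^ ((n:ℝ) - 3/4/2))⁻¹ * (r ^ ((n:ℝ) - 3/4/2))⁻¹ * r⁻¹ := by
                  rw [← Real.rpow_neg hr0.le, ← Real.rpow_neg_one r,
                    ← Real.rpow_add hr0, ← Real.rpow_add hr0, hsdef]
                  congr 1
                  ring
                rw [key, div_eq_mul_inv]
                ring
        have hint : IntegrableOn (fun r : ℝ => (c₂ * (2 * ρ) ^ n) ^ 2 * r ^ s) (Ioi ρ) :=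
          (integrableOn_Ioi_rpow_of_lt hs hρ).const_mul _
        have hnn : 0 ≤ᵐ[volume.restrict (Ioi ρ)]
            fun r : ℝ => (c₂ * (2 * ρ) ^ n) ^ 2 * r ^ s := by
          refine (ae_restrict_iff' measurableSet_Ioi).2 (Filter.Eventually.of_forall ?_)
          intro r hrm
          exact mul_nonneg (by positivity) (Real.rpow_nonneg (hρ.trans hrm).le _)
        calc (∫⁻ r in Ioi ρ, _) ≤ ∫⁻ r in Ioi ρ,
              ENNReal.ofReal ((c₂ * (2 * ρ) ^ n) ^ 2 * r ^ s) :=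
            setLIntegral_mono' measurableSet_Ioi hb
          _ = ENNReal.ofReal (∫ r in Ioi ρ, (c₂ * (2 * ρ) ^ n) ^ 2 * r ^ s) :=
            (ofReal_integral_eq_lintegral_ofReal hint hnn).symm
          _ ≤ ENNReal.ofReal (c₂ ^ 2 * 4 ^ n * ρ ^ ((3:ℝ)/4)) := by
            refine ENNReal.ofReal_le_ofReal ?_
            rw [integral_const_mul, integral_Ioi_rpow_of_lt hs hρ]
            have hn1 : (1:ℝ) ≤ (n:ℝ) := by exact_mod_cast hn
            have hden : (0:ℝ) < 2*(n:ℝ) - 3/4 := by linarith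
            have hss : ρ ^ (s + 1) = ρ ^ ((3:ℝ)/4) / (ρ ^ n) ^ 2 := by
              rw [show s + 1 = (3:ℝ)/4 - 2*(n:ℝ) by rw [hsdef]; ring, Real.rpow_sub hρ]
              congr 1
              rw [show (2*(n:ℝ)) = ((2*n : ℕ):ℝ) by push_cast; ring, Real.rpow_natCast,
                mul_comm, pow_mul]
            have hρn : (ρ:ℝ) ^ n ≠ 0 := by positivity
            have hneg : -ρ ^ (s+1) / (s+1) = ρ ^ (s+1) / (2*(n:ℝ) - 3/4) := by
              rw [hsdef]
              rw [div_eq_div_iff (show -(2*(n:ℝ)) - 1/4 + 1 ≠ 0 from ne_of_lt (by linarith)) hden.ne']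
              ring
            rw [hneg, hss]
            have hstep : (c₂ * (2 * ρ) ^ n) ^ 2 * (ρ ^ ((3:ℝ)/4) / (ρ ^ n) ^ 2 / (2*(n:ℝ) - 3/4))
                = c₂ ^ 2 * 4 ^ n * ρ ^ ((3:ℝ)/4) / (2*(n:ℝ) - 3/4) := by
              rw [mul_pow, mul_pow, h4, div_div, ← mul_div_assoc,
                div_eq_div_iff (ne_of_gt (mul_pos (by positivity) hden)) hden.ne']
              ring
            rw [hstep]
            exact div_le_self (by positivity) (by linarith)
      calc _ ≤ ENNReal.ofReal (c₂ ^ 2 * (4/3) * ρ ^ ((3:ℝ)/4))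
            + ENNReal.ofReal (c₂ ^ 2 * 4 ^ n * ρ ^ ((3:ℝ)/4)) := add_le_add hpiece1 hpiece2
        _ = ENNReal.ofReal (K * ρ ^ ((3:ℝ)/4)) := by
            rw [← ENNReal.ofReal_add (by positivity) (by positivity)]
            congr 1
            rw [hKdef]
            ring
    calc (∫⁻ x, _ ∂(μ.restrict (ball z ρ)))
        ≤ ∫⁻ _, ENNReal.ofReal (K * ρ ^ ((3:ℝ)/4)) ∂(μ.restrict (ball z ρ)) :=
          lintegral_mono_ae hae
      _ = ENNReal.ofReal (K * ρ ^ ((3:ℝ)/4)) * μ.restrict (ball z ρ) univ := lintegral_const _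
      _ = ENNReal.ofReal (K * ρ ^ ((3:ℝ)/4)) * μ (ball z ρ) := by
          rw [Measure.restrict_apply_univ]
      _ ≤ ENNReal.ofReal (K * ρ ^ ((3:ℝ)/4)) * μ (ball z (2 * ρ)) := by
          gcongr
          linarith
  -- conclusion
  refine hmain.trans ?_
  have hfac : ENNReal.ofReal (K * ρ ^ ((3:ℝ)/4))
      ≤ ENNReal.ofReal (K * 4 ^ n / c₁ ^ 2 * ρ ^ ((3:ℝ)/4)) * ballDensity n μ z (2 * ρ) ^ 2 := by
    calc ENNReal.ofReal (K * ρ ^ ((3:ℝ)/4))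
        = ENNReal.ofReal (K * 4 ^ n / c₁ ^ 2 * ρ ^ ((3:ℝ)/4)) *
            ENNReal.ofReal ((c₁ / 2 ^ n) ^ 2) := by
          rw [← ENNReal.ofReal_mul (by positivity)]
          congr 1
          rw [div_pow, h4]
          have h2n : ((2:ℝ) ^ n) ^ 2 ≠ 0 := by positivity
          field_simp
      _ ≤ ENNReal.ofReal (K * 4 ^ n / c₁ ^ 2 * ρ ^ ((3:ℝ)/4)) * ballDensity n μ z (2 * ρ) ^ 2 := by
          gcongr
          rw [ENNReal.ofReal_pow (by positivity)]
          exact pow_le_pow_left' hθ 2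
  calc ENNReal.ofReal (K * ρ ^ ((3:ℝ)/4)) * μ (ball z (2 * ρ))
      ≤ ENNReal.ofReal (K * 4 ^ n / c₁ ^ 2 * ρ ^ ((3:ℝ)/4)) * ballDensity n μ z (2 * ρ) ^ 2 *
        μ (ball z (2 * ρ)) := mul_le_mul_left hfac _
    _ = _ := rfl

end
end

section
/- Let A ≥ 4 and C_d ≥ 1 + 2√A be real numbers, let m ≥ 1 be an integer, let p₀ ≥ 0 and let t₁, …, t_m be nonnegative reals. For 1 ≤ j ≤ m define p_j = Σ_{i=1}^{j} A^{i−j} t_i + A^{−j} p₀. If C_d · t_j ≤ p_j for every 1 ≤ j ≤ m, then t_m ≤ A^{−m/2} p₀ and p_m ≤ 2 A^{−m/2} p₀. -/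
/-- **Geometric decay along chains of non-𝒫-doubling cubes** (quantitative core of
Lemma 3.4 of Dąbrowski–Tolsa).  `t j` plays the role of the density
`μ(2B_{Q_j})/ℓ(Q_j)ⁿ` of the `j`-th cube in a chain, and
`p j = ∑_{i=1}^{j} A^{i−j} t i + A^{−j} p₀` plays the role of the Poisson-type
coefficient `𝒫(Q_j)`.  If `C_d · t j ≤ p j` for `1 ≤ j ≤ m` (the intermediate cubes are
not 𝒫-doubling), then `t m ≤ A^{-m/2} p₀` and `p m ≤ 2 A^{-m/2} p₀`. -/
theorem statement_11 (A Cd : ℝ) (hA : 4 ≤ A) (hCd : 1 + 2 * Real.sqrt A ≤ Cd)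
    (m : ℕ) (hm : 1 ≤ m) (p₀ : ℝ) (hp₀ : 0 ≤ p₀)
    (t : ℕ → ℝ) (ht : ∀ i, 1 ≤ i → i ≤ m → 0 ≤ t i)
    (hnd : ∀ j, 1 ≤ j → j ≤ m →
      Cd * t j ≤ (∑ i ∈ Finset.Icc 1 j, A ^ ((i : ℤ) - (j : ℤ)) * t i) + A ^ (-(j : ℤ)) * p₀) :
    t m ≤ A ^ (-(m : ℝ) / 2) * p₀ ∧
      (∑ i ∈ Finset.Icc 1 m, A ^ ((i : ℤ) - (m : ℤ)) * t i) + A ^ (-(m : ℤ)) * p₀ ≤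
        2 * (A ^ (-(m : ℝ) / 2) * p₀) := by
  have hA0 : (0:ℝ) < A := by linarith
  set s := Real.sqrt A with hs
  have hs2 : (2:ℝ) ≤ s := by
    have : Real.sqrt 4 ≤ s := Real.sqrt_le_sqrt hA
    rwa [show (4:ℝ) = 2^2 by norm_num, Real.sqrt_sq (by norm_num : (0:ℝ) ≤ 2)] at this
  have hs0 : (0:ℝ) < s := by linarith
  have hsA : s * s = A := Real.mul_self_sqrt hA0.le
  set P : ℕ → ℝ := fun j => (∑ i ∈ Finset.Icc 1 j, A ^ ((i : ℤ) - (j : ℤ)) * t i) + A ^ (-(j : ℤ)) * p₀ with hP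
  have hnd' : ∀ j, 1 ≤ j → j ≤ m → Cd * t j ≤ P j := by
    intro j h1 h2; rw [hP]; exact hnd j h1 h2
  have hrec : ∀ j : ℕ, P (j+1) = A⁻¹ * P j + t (j+1) := by
    intro j
    have h1 : ∀ i : ℕ, A ^ ((i:ℤ) - ((j+1:ℕ):ℤ)) = A⁻¹ * A ^ ((i:ℤ) - (j:ℤ)) := by
      intro i
      rw [show (i:ℤ) - ((j+1:ℕ):ℤ) = (-1) + ((i:ℤ) - (j:ℤ)) by push_cast; ring,
        zpow_add₀ hA0.ne', zpow_neg_one]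
    have h2 : A ^ (-((j+1:ℕ):ℤ)) = A⁻¹ * A ^ (-(j:ℤ)) := by
      rw [show -((j+1:ℕ):ℤ) = (-1) + (-(j:ℤ)) by push_cast; ring, zpow_add₀ hA0.ne', zpow_neg_one]
    have hsum : ∑ i ∈ Finset.Icc 1 (j+1), A ^ ((i:ℤ) - ((j+1:ℕ):ℤ)) * t i
        = (∑ i ∈ Finset.Icc 1 j, A⁻¹ * (A ^ ((i:ℤ) - (j:ℤ)) * t i)) + t (j+1) := by
      rw [Finset.sum_Icc_succ_top (by omega : 1 ≤ j+1), h1 (j+1)]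
      have hA1 : A ^ (((j+1:ℕ):ℤ) - (j:ℤ)) = A := by
        rw [show ((j+1:ℕ):ℤ) - (j:ℤ) = 1 by push_cast; ring, zpow_one]
      rw [hA1]
      congr 1
      · exact Finset.sum_congr rfl (fun i _ => by rw [h1 i]; ring)
      · rw [inv_mul_cancel₀ hA0.ne', one_mul]
    rw [hP]; simp only
    rw [hsum, h2, mul_add, Finset.mul_sum]
    ring
  have key : ∀ j : ℕ, j ≤ m → 0 ≤ P j ∧ P j ≤ s⁻¹ ^ j * p₀ := by
    intro j
    induction j with
    | zero =>
      intro _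
      have : P 0 = p₀ := by rw [hP]; simp
      rw [this]; simp [hp₀]
    | succ j ih =>
      intro hjm
      obtain ⟨h0, hle⟩ := ih (by omega)
      have htj : 0 ≤ t (j+1) := ht (j+1) (by omega) hjm
      have hcd : Cd * t (j+1) ≤ A⁻¹ * P j + t (j+1) := by
        rw [← hrec]; exact hnd' (j+1) (by omega) hjm
      have hCd2 : 2 * s + 1 ≤ Cd := by linarith
      have hAinv : 0 ≤ A⁻¹ * P j := mul_nonneg (by positivity) h0
      have htle : t (j+1) ≤ A⁻¹ * P j / (2 * s) := by
        have h1 : (Cd - 1) * t (j+1) ≤ A⁻¹ * P j := by linarith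
        have h2 : (2 * s) * t (j+1) ≤ A⁻¹ * P j := by nlinarith
        rw [le_div_iff₀ (by linarith)]; linarith
      have hP1 : P (j+1) ≤ A⁻¹ * P j * (1 + 1/(2*s)) := by
        rw [hrec]
        have : A⁻¹ * P j / (2*s) = A⁻¹ * P j * (1/(2*s)) := by ring
        nlinarith
      have hstep : A⁻¹ * (1 + 1/(2*s)) ≤ s⁻¹ := by
        rw [← hsA]
        have h2s : (1:ℝ)/(2*s) ≤ 1/4 := by
          rw [div_le_div_iff₀ (by linarith) (by norm_num)]; linarith
        have h3 : (s*s)⁻¹ * (1 + 1/(2*s)) ≤ (s*s)⁻¹ * (5/4) :=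
          mul_le_mul_of_nonneg_left (by linarith) (by positivity)
        refine h3.trans ?_
        rw [show (s*s)⁻¹ * (5/4) = (5/4)/(s*s) by ring, inv_eq_one_div,
          div_le_div_iff₀ (by positivity) hs0]
        nlinarith
      have h0' : 0 ≤ P (j+1) := by rw [hrec]; positivity
      refine ⟨h0', ?_⟩
      calc P (j+1) ≤ A⁻¹ * P j * (1 + 1/(2*s)) := hP1
        _ = (A⁻¹ * (1 + 1/(2*s))) * P j := by ring
        _ ≤ s⁻¹ * P j := mul_le_mul_of_nonneg_right hstep h0
        _ ≤ s⁻¹ * (s⁻¹ ^ j * p₀) := by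
            exact mul_le_mul_of_nonneg_left hle (by positivity)
        _ = s⁻¹ ^ (j+1) * p₀ := by ring
  obtain ⟨h0m, hlem⟩ := key m le_rfl
  have hpow : s⁻¹ ^ m = A ^ (-(m:ℝ)/2) := by
    rw [hs, Real.sqrt_eq_rpow, ← Real.rpow_neg hA0.le,
      ← Real.rpow_natCast (A ^ (-(1/2):ℝ)) m, ← Real.rpow_mul hA0.le]
    ring_nf
  rw [hpow] at hlem
  have htm : t m ≤ P m := by
    have h := hnd' m hm le_rfl
    have h5 : (5:ℝ) ≤ Cd := by linarith
    nlinarith [ht m hm le_rfl]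
  constructor
  · calc t m ≤ P m := htm
      _ ≤ A ^ (-(m:ℝ)/2) * p₀ := hlem
  · have : P m ≤ 2 * (A ^ (-(m:ℝ)/2) * p₀) := by
      have : 0 ≤ A ^ (-(m:ℝ)/2) * p₀ := by positivity
      linarith
    rw [hP] at this
    exact this
end

section
/- There is an absolute constant C₁ with the following property. Let N, N₀ ≥ 1 be integers, C ≥ 1, and Λ > 1 with C ≤ Λ^{1/(12N)}. Set δ₀ = Λ^{−N₀−1/(2N)}. Then there is a positive integer N₁ ≤ C₁ N₀ N such that: for every θ > 0 and every finite sequence θ₁, …, θ_{N₁} of positive reals satisfying, for each 1 ≤ k < N₁, either θ_{k+1} = Λ θ_k or θ_{k+1} ≤ C δ₀ θ_k, there exists some k with 1 ≤ k ≤ N₁ such that θ_k ∉ ( θ Λ^{−N₀−3/(4N)}, θ Λ^{1−3/(4N)} ). -/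
set_option maxHeartbeats 400000


/-- **Density leaves the interval `I_θ` in boundedly many steps** (quantitative core of
Lemma 5.4 of Dąbrowski–Tolsa).  `a k` plays the role of the density `Θ(R_k)` of the `k`-th
cube in a chain of `Top` cubes with `R_{k+1} ∈ End(R_k)`: at each step the density either
jumps up exactly by the factor `Λ` or drops by at least the factor `C δ₀`, where
`δ₀ = Λ^{-N₀-1/(2N)}`.  Then within at most `N₁ ≤ C₁ N₀ N` steps the density must leave
the interval `(θ Λ^{-N₀-3/(4N)}, θ Λ^{1-3/(4N)})`. -/
theorem statement_12 :
    ∃ C₁ : ℝ, 0 < C₁ ∧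
      ∀ (N N₀ : ℕ), 1 ≤ N → 1 ≤ N₀ →
      ∀ (C Λ : ℝ), 1 ≤ C → 1 < Λ → C ≤ Λ ^ (1 / (12 * (N : ℝ))) →
      ∃ N₁ : ℕ, 1 ≤ N₁ ∧ (N₁ : ℝ) ≤ C₁ * N₀ * N ∧
        ∀ θ : ℝ, 0 < θ → ∀ a : ℕ → ℝ,
          (∀ k, 1 ≤ k → k ≤ N₁ → 0 < a k) →
          (∀ k, 1 ≤ k → k < N₁ →
            a (k + 1) = Λ * a k ∨
              a (k + 1) ≤ C * Λ ^ (-(N₀ : ℝ) - 1 / (2 * (N : ℝ))) * a k) →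
          ∃ k, 1 ≤ k ∧ k ≤ N₁ ∧
            a k ∉ Set.Ioo (θ * Λ ^ (-(N₀ : ℝ) - 3 / (4 * (N : ℝ))))
              (θ * Λ ^ (1 - 3 / (4 * (N : ℝ)))) := by
  classical
  refine ⟨8, by norm_num, ?_⟩
  intro N N₀ hN hN₀ C Λ hC1 hΛ1 hCΛ
  have hn1 : (1:ℝ) ≤ (N:ℝ) := by exact_mod_cast hN
  have hn0 : (0:ℝ) < (N:ℝ) := by linarith
  have hN₀1 : (1:ℝ) ≤ (N₀:ℝ) := by exact_mod_cast hN₀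
  have hΛ0 : (0:ℝ) < Λ := by linarith
  have hL0 : 0 < Real.log Λ := Real.log_pos hΛ1
  refine ⟨6 * N₀ * N + 2, by omega, ?_, ?_⟩
  · push_cast
    nlinarith [mul_le_mul hN₀1 hn1 (by norm_num : (0:ℝ) ≤ 1) (by linarith : (0:ℝ) ≤ (N₀:ℝ))]
  intro θ hθ a ha hstep
  by_contra hcon
  push_neg at hcon
  set M := 6 * N₀ * N + 1 with hMdef
  set L := Real.log Λ with hLdef
  have hlogC : Real.log C ≤ 1 / (12 * (N:ℝ)) * L := by
    have h := Real.log_le_log (by linarith : (0:ℝ) < C) hCΛ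
    rwa [Real.log_rpow hΛ0] at h
  have hpos : ∀ m, m ≤ M → 0 < a (m + 1) := fun m hm => ha (m+1) (by omega) (by omega)
  have hin : ∀ m, m ≤ M →
      Real.log θ + (-(N₀:ℝ) - 3/(4*(N:ℝ))) * L < Real.log (a (m+1)) ∧
      Real.log (a (m+1)) < Real.log θ + (1 - 3/(4*(N:ℝ))) * L := by
    intro m hm
    obtain ⟨h1, h2⟩ := hcon (m+1) (by omega) (by omega)
    constructor
    · have h := Real.log_lt_log (by positivity) h1
      rwa [Real.log_mul (ne_of_gt hθ) (ne_of_gt (Real.rpow_pos_of_pos hΛ0 _)),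
        Real.log_rpow hΛ0] at h
    · have h := Real.log_lt_log (hpos m hm) h2
      rwa [Real.log_mul (ne_of_gt hθ) (ne_of_gt (Real.rpow_pos_of_pos hΛ0 _)),
        Real.log_rpow hΛ0] at h
  have hup : ∀ m, m ≤ M → a (m+2) = Λ * a (m+1) →
      Real.log (a (m+2)) = Real.log (a (m+1)) + L := by
    intro m hm hP
    rw [hP, Real.log_mul (ne_of_gt hΛ0) (ne_of_gt (hpos m hm))]
    ring
  have hdown : ∀ m, m < M → ¬ (a (m+2) = Λ * a (m+1)) →
      Real.log (a (m+2)) ≤ Real.log (a (m+1)) - ((N₀:ℝ) + 5/(12*(N:ℝ))) * L := by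
    intro m hm hP
    have hd := (hstep (m+1) (by omega) (by omega)).resolve_left hP
    have hpos2 : 0 < a (m+2) := ha (m+2) (by omega) (by omega)
    have hle : Real.log (a (m+2)) ≤
        Real.log (C * Λ ^ (-(N₀:ℝ) - 1/(2*(N:ℝ))) * a (m+1)) :=
      Real.log_le_log hpos2 hd
    rw [Real.log_mul (by positivity) (ne_of_gt (hpos m (by omega))),
        Real.log_mul (by linarith : C ≠ 0) (ne_of_gt (Real.rpow_pos_of_pos hΛ0 _)),
        Real.log_rpow hΛ0] at hle
    have key : 1/(12*(N:ℝ)) * L + (-(N₀:ℝ) - 1/(2*(N:ℝ))) * L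
        = -(((N₀:ℝ) + 5/(12*(N:ℝ))) * L) := by
      have hne : (N:ℝ) ≠ 0 := ne_of_gt hn0
      field_simp
      ring
    linarith
  let F : ℕ → ℕ × ℕ := fun m =>
    Nat.rec (motive := fun _ => ℕ × ℕ) (0, 0)
      (fun m' p => if a (m' + 2) = Λ * a (m' + 1) then (p.1, p.2 + 1) else (p.1 + 1, 0)) m
  have hF0 : F 0 = (0, 0) := rfl
  have hFs : ∀ m, F (m+1) =
      if a (m + 2) = Λ * a (m + 1) then ((F m).1, (F m).2 + 1) else ((F m).1 + 1, 0) :=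
    fun m => rfl
  have hQ : ∀ m, m ≤ M →
      (Real.log θ + (-(N₀:ℝ) - 3/(4*(N:ℝ))) * L + ((F m).2 : ℝ) * L < Real.log (a (m+1))) ∧
      (1 ≤ (F m).1 → Real.log (a (m+1)) ≤ Real.log θ + ((-(N₀:ℝ) - 3/(4*(N:ℝ))) + 1) * L
          - 5/(12*(N:ℝ)) * ((F m).1 : ℝ) * L + ((F m).2 : ℝ) * L) ∧
      (m ≤ (N₀ + 1) * (F m).1 + (F m).2) ∧
      (5/(12*(N:ℝ)) * ((F m).1 : ℝ) < 1) := by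
    intro m
    induction m with
    | zero =>
      intro _
      refine ⟨?_, ?_, ?_, ?_⟩
      · simpa [hF0] using (hin 0 (by omega)).1
      · rw [hF0]; intro h; exact absurd h (by norm_num)
      · simp [hF0]
      · rw [hF0]; norm_num
    | succ m ih =>
      intro hm1
      have hmM : m ≤ M := by omega
      obtain ⟨i1, i2, i3, i4⟩ := ih hmM
      have hbd := hin m hmM
      have hsle : (F m).2 ≤ N₀ := by
        have hsl : ((F m).2 : ℝ) * L < ((N₀:ℝ) + 1) * L := by
          have hr : (Real.log θ + (1 - 3/(4*(N:ℝ))) * L) -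
              (Real.log θ + (-(N₀:ℝ) - 3/(4*(N:ℝ))) * L) = ((N₀:ℝ)+1) * L := by ring
          linarith [hbd.2]
        have h2 := (mul_lt_mul_iff_of_pos_right hL0).mp hsl
        have h3 : (F m).2 < N₀ + 1 := by exact_mod_cast h2
        omega
      have hsleL : ((F m).2 : ℝ) * L ≤ (N₀:ℝ) * L :=
        mul_le_mul_of_nonneg_right (by exact_mod_cast hsle) hL0.le
      by_cases hP : a (m+2) = Λ * a (m+1)
      · have hy := hup m hmM hP
        have hF' : F (m+1) = ((F m).1, (F m).2 + 1) := by rw [hFs m, if_pos hP]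
        refine ⟨?_, ?_, ?_, ?_⟩
        · rw [hF']; dsimp only
          push_cast
          have hexp : (((F m).2:ℝ) + 1) * L = ((F m).2:ℝ) * L + L := by ring
          linarith
        · rw [hF']; dsimp only
          intro hd1
          have h2 := i2 hd1
          push_cast
          have hexp : (((F m).2:ℝ) + 1) * L = ((F m).2:ℝ) * L + L := by ring
          linarith
        · rw [hF']; dsimp only
          calc m + 1 ≤ ((N₀+1) * (F m).1 + (F m).2) + 1 := Nat.succ_le_succ i3
            _ = (N₀+1) * (F m).1 + ((F m).2 + 1) := by ring
        · rw [hF']; dsimp only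
          exact i4
      · have hy := hdown m (by omega) hP
        have hF' : F (m+1) = ((F m).1 + 1, 0) := by rw [hFs m, if_neg hP]
        have hlow' := (hin (m+1) hm1).1
        have hi2' : Real.log (a (m+2)) ≤ Real.log θ + ((-(N₀:ℝ) - 3/(4*(N:ℝ))) + 1) * L
            - 5/(12*(N:ℝ)) * (((F m).1 : ℝ) + 1) * L := by
          rcases Nat.eq_zero_or_pos (F m).1 with h0 | h1
          · rw [h0]
            push_cast
            have hexp : (1 - 3/(4*(N:ℝ))) * L - ((N₀:ℝ) + 5/(12*(N:ℝ))) * L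
                = ((-(N₀:ℝ) - 3/(4*(N:ℝ))) + 1) * L - 5/(12*(N:ℝ)) * ((0:ℝ) + 1) * L := by
              ring
            linarith [hbd.2]
          · have h2 := i2 h1
            have hexp : 5/(12*(N:ℝ)) * (((F m).1:ℝ) + 1) * L
                = 5/(12*(N:ℝ)) * ((F m).1:ℝ) * L + 5/(12*(N:ℝ)) * L := by ring
            have hexp2 : ((N₀:ℝ) + 5/(12*(N:ℝ))) * L
                = (N₀:ℝ)*L + 5/(12*(N:ℝ))*L := by ring
            linarith
        refine ⟨?_, ?_, ?_, ?_⟩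
        · rw [hF']; dsimp only
          push_cast
          simpa using hlow'
        · rw [hF']; dsimp only
          intro _
          push_cast
          linarith [hi2']
        · rw [hF']; dsimp only
          calc m + 1 ≤ ((N₀+1) * (F m).1 + (F m).2) + 1 := Nat.succ_le_succ i3
            _ = (N₀+1) * (F m).1 + ((F m).2 + 1) := by ring
            _ ≤ (N₀+1) * (F m).1 + (N₀ + 1) := Nat.add_le_add_left (Nat.succ_le_succ hsle) _
            _ = (N₀+1) * ((F m).1 + 1) + 0 := by ring
        · rw [hF']; dsimp only
          have h1 : 5/(12*(N:ℝ)) * (((F m).1:ℝ) + 1) * L < 1 * L := by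
            have hexp : ((-(N₀:ℝ) - 3/(4*(N:ℝ))) + 1) * L
                = (-(N₀:ℝ) - 3/(4*(N:ℝ))) * L + 1 * L := by ring
            linarith [hi2', hlow']
          have h2 := (mul_lt_mul_iff_of_pos_right hL0).mp h1
          push_cast
          linarith
  obtain ⟨j1, j2, j3, j4⟩ := hQ M le_rfl
  have hbd := hin M le_rfl
  have hsle : ((F M).2 : ℝ) ≤ (N₀:ℝ) := by
    have hsl : ((F M).2 : ℝ) * L < ((N₀:ℝ) + 1) * L := by
      have hr : (Real.log θ + (1 - 3/(4*(N:ℝ))) * L) -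
          (Real.log θ + (-(N₀:ℝ) - 3/(4*(N:ℝ))) * L) = ((N₀:ℝ)+1) * L := by ring
      linarith [hbd.2]
    have h2 := (mul_lt_mul_iff_of_pos_right hL0).mp hsl
    have h3 : (F M).2 < N₀ + 1 := by exact_mod_cast h2
    have h4 : (F M).2 ≤ N₀ := by omega
    exact_mod_cast h4
  have hd : 5 * ((F M).1 : ℝ) < 12 * (N:ℝ) := by
    rw [div_mul_eq_mul_div, div_lt_one (by positivity)] at j4
    linarith
  have hj3 : ((6:ℝ) * N₀ * N + 1) ≤ ((N₀:ℝ)+1) * ((F M).1:ℝ) + ((F M).2:ℝ) := by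
    have h := j3
    rw [hMdef] at h
    exact_mod_cast h
  have f1 : ((N₀:ℝ)+1) * (5 * ((F M).1:ℝ)) < ((N₀:ℝ)+1) * (12 * (N:ℝ)) :=
    mul_lt_mul_of_pos_left hd (by linarith)
  have f2 : (1:ℝ) * (N:ℝ) ≤ (N₀:ℝ) * (N:ℝ) :=
    mul_le_mul_of_nonneg_right hN₀1 hn0.le
  have f3 : (N₀:ℝ) * (1:ℝ) ≤ (N₀:ℝ) * (N:ℝ) :=
    mul_le_mul_of_nonneg_left hn1 (by linarith)
  have goal : False := by
    generalize ((F M).1 : ℝ) = x at hj3 f1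
    generalize ((F M).2 : ℝ) = y at hj3 hsle
    nlinarith [hj3, hsle, f1, f2, f3]
  exact goal
end

section
/- Let n ≥ 1 be an integer and let Γ ⊂ ℝ^{n+1} be a closed set such that ν = H^n|_Γ (the restriction of n-dimensional Hausdorff measure to Γ) satisfies c₁ r^n ≤ ν(B(x,r)) ≤ c₂ r^n for all x ∈ Γ and 0 < r < diam Γ. Let C_* ≥ 2, Θ > 0, let μ be a Radon measure on ℝ^{n+1}, and let {P_i}_{i∈I} be a countable family of pairwise disjoint Borel sets with P_i ⊂ B_i := B(x_i, r_i) such that, for every i ∈ I: (a) (C_*/2) B_i ∩ Γ ≠ ∅; (b) (C_*/2) r_i ≤ diam Γ; and (c) μ(3 C_* B_i) ≤ Θ r_i^n. Then there exist Borel functions g_i : Γ → [0,∞), i ∈ I, such that each g_i is supported in Γ ∩ closure(C_* B_i), ∫_Γ g_i dν = μ(P_i) for every i, and Σ_{i∈I} g_i ≤ C Θ ν-a.e. on Γ, where C depends only on n, c₁, c₂ and C_*. -/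
open MeasureTheory Metric Set ENNReal

noncomputable section

set_option maxHeartbeats 2000000 in
/-- **Lemma 9.9 of Dąbrowski–Tolsa (abstract form):** given an `n`-AD-regular closed set
`Γ ⊂ ℝ^{n+1}` (with respect to `ν = H^n|_Γ`), the mass `μ(P_i)` of each member of a
pairwise disjoint family of Borel sets `P_i ⊆ B_i = B(x_i,r_i)` lying near `Γ` and
satisfying the packing bound `μ(3C_* B_i) ≤ Θ r_iⁿ` can be spread onto `Γ` as densities
`g_i` supported on `Γ ∩ closure(C_* B_i)`, with the correct total masses and with
`∑_i g_i ≤ C Θ` ν-a.e. -/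
theorem statement_14 (n : ℕ) (hn : 1 ≤ n) (c₁ c₂ Cs : ℝ)
    (hc₁ : 0 < c₁) (hc₁₂ : c₁ ≤ c₂) (hCs : 2 ≤ Cs) :
    ∃ C : ℝ, 0 < C ∧
      ∀ Γ : Set (EuclideanSpace ℝ (Fin (n + 1))), IsClosed Γ →
      (∀ x ∈ Γ, ∀ r : ℝ, 0 < r → ENNReal.ofReal r < EMetric.diam Γ →
          ENNReal.ofReal (c₁ * r ^ n) ≤ (μH[(n : ℝ)]).restrict Γ (ball x r) ∧
          (μH[(n : ℝ)]).restrict Γ (ball x r) ≤ ENNReal.ofReal (c₂ * r ^ n)) →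
      ∀ Θ : ℝ, 0 < Θ →
      ∀ (μ : Measure (EuclideanSpace ℝ (Fin (n + 1)))), IsLocallyFiniteMeasure μ →
      ∀ (I : Type), Countable I →
      ∀ (x : I → EuclideanSpace ℝ (Fin (n + 1))) (r : I → ℝ)
        (P : I → Set (EuclideanSpace ℝ (Fin (n + 1)))),
      (∀ i, 0 < r i) →
      (∀ i, MeasurableSet (P i)) →
      (Pairwise fun i j => Disjoint (P i) (P j)) →
      (∀ i, P i ⊆ ball (x i) (r i)) →
      (∀ i, (ball (x i) (Cs / 2 * r i) ∩ Γ).Nonempty) →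
      (∀ i, ENNReal.ofReal (Cs / 2 * r i) ≤ EMetric.diam Γ) →
      (∀ i, μ (ball (x i) (3 * Cs * r i)) ≤ ENNReal.ofReal (Θ * r i ^ n)) →
      ∃ g : I → EuclideanSpace ℝ (Fin (n + 1)) → ℝ,
        (∀ i, Measurable (g i)) ∧
        (∀ i y, 0 ≤ g i y) ∧
        (∀ i y, g i y ≠ 0 → y ∈ Γ ∩ closure (ball (x i) (Cs * r i))) ∧
        (∀ i, (∫⁻ y, ENNReal.ofReal (g i y) ∂((μH[(n : ℝ)]).restrict Γ)) = μ (P i)) ∧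
        (∀ᵐ y ∂((μH[(n : ℝ)]).restrict Γ),
          (∑' i : I, ENNReal.ofReal (g i y)) ≤ ENNReal.ofReal (C * Θ)) := by
  classical
  have hCs0 : (0:ℝ) < Cs := lt_of_lt_of_le two_pos hCs
  have hc₂ : 0 < c₂ := lt_of_lt_of_le hc₁ hc₁₂
  set c₅ : ℝ := c₁ * (Cs/4)^n with hc₅def
  have hc₅ : 0 < c₅ := mul_pos hc₁ (pow_pos (by linarith) n)
  set cup : ℝ := c₂ * (Cs/3)^n with hcupdef
  have hcup : 0 < cup := mul_pos hc₂ (pow_pos (by linarith) n)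
  set c₉ : ℝ := 2*cup/c₅ with hc₉def
  have hc₉ : 0 < c₉ := div_pos (by linarith) hc₅
  set M : ℝ := 2*c₉/c₅ with hMdef
  have hM : 0 < M := div_pos (by linarith) hc₅
  refine ⟨M + 2/c₅, add_pos hM (div_pos two_pos hc₅), ?_⟩
  intro Γ hΓcl hreg Θ hΘ μ _hμfin I _hI x r P hr hPm hPd hPB hne hdiam hpack
  set ν := (μH[(n : ℝ)]).restrict Γ with hνdef
  clear_value ν
  have hΓm : MeasurableSet Γ := hΓcl.measurableSet
  -- choose points y i on Γ near x i
  have hych : ∀ i, ∃ z, z ∈ ball (x i) (Cs/2 * r i) ∧ z ∈ Γ := by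
    intro i; obtain ⟨z, hz⟩ := hne i; exact ⟨z, hz.1, hz.2⟩
  choose y hyb hyΓ using hych
  have hdiam4 : ∀ i, ENNReal.ofReal (Cs * r i/4) ≤ EMetric.diam Γ := by
    intro i
    refine le_trans (ENNReal.ofReal_le_ofReal ?_) (hdiam i)
    have := mul_pos hCs0 (hr i)
    linarith
  -- lower regularity up to the closed radius
  have hlow : ∀ (w : EuclideanSpace ℝ (Fin (n+1))) (R : ℝ), w ∈ Γ → 0 < R →
      ENNReal.ofReal R ≤ EMetric.diam Γ → ENNReal.ofReal (c₁ * R^n) ≤ ν (ball w R) := by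
    intro w R hw hR hRd
    have hcont : Filter.Tendsto (fun u : ℝ => ENNReal.ofReal (c₁ * u^n))
        (nhdsWithin R (Iio R)) (nhds (ENNReal.ofReal (c₁ * R^n))) := by
      have hc : Continuous fun u : ℝ => ENNReal.ofReal (c₁ * u ^ n) :=
        ENNReal.continuous_ofReal.comp (continuous_const.mul (continuous_pow n))
      exact (hc.continuousAt.tendsto).mono_left nhdsWithin_le_nhds
    refine le_of_tendsto hcont ?_
    filter_upwards [Ioo_mem_nhdsLT_of_mem (show R ∈ Ioc (R/2) R from ⟨by linarith, le_rfl⟩)]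
      with u hu
    have hu0 : 0 < u := by have := hu.1; linarith
    have hud : ENNReal.ofReal u < EMetric.diam Γ :=
      lt_of_lt_of_le ((ENNReal.ofReal_lt_ofReal_iff hR).mpr hu.2) hRd
    exact le_trans ((hreg w hw u hu0 hud).1) (measure_mono (ball_subset_ball hu.2.le))
  -- scales
  set lb : ℝ := 4/3 with hlbdef
  have hlb1 : (1:ℝ) < lb := by norm_num
  set s : I → ℤ := fun i => ⌊Real.logb lb (r i)⌋ with hsdef
  have hs_le : ∀ i, lb ^ (s i) ≤ r i := by
    intro i
    simp only [hsdef]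
    have h1 : lb ^ (⌊Real.logb lb (r i)⌋) = lb ^ ((⌊Real.logb lb (r i)⌋ : ℝ)) :=
      (Real.rpow_intCast lb _).symm
    rw [h1]
    calc lb ^ ((⌊Real.logb lb (r i)⌋ : ℝ)) ≤ lb ^ (Real.logb lb (r i)) :=
          Real.rpow_le_rpow_of_exponent_le hlb1.le (Int.floor_le _)
      _ = r i := Real.rpow_logb (by norm_num) (by norm_num) (hr i)
  have hs_lt : ∀ i, r i < lb ^ (s i + 1) := by
    intro i
    simp only [hsdef]
    have h1 : lb ^ (⌊Real.logb lb (r i)⌋ + 1) = lb ^ (((⌊Real.logb lb (r i)⌋ + 1 : ℤ) : ℝ)) :=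
      (Real.rpow_intCast _ _).symm
    rw [h1]
    have h2 : r i = lb ^ (Real.logb lb (r i)) :=
      (Real.rpow_logb (by norm_num) (by norm_num) (hr i)).symm
    nth_rewrite 1 [h2]
    apply Real.rpow_lt_rpow_of_exponent_lt hlb1
    push_cast
    exact Int.lt_floor_add_one _
  have hscale : ∀ k m, s k ≤ s m → r k ≤ lb * r m := by
    intro k m h
    have h1 : r k < lb ^ (s k + 1) := hs_lt k
    have h2 : lb ^ (s k + 1) ≤ lb ^ (s m + 1) := zpow_le_zpow_right₀ hlb1.le (by omega)
    have h3 : lb ^ (s m + 1) = lb ^ (s m) * lb := zpow_add_one₀ (by norm_num) _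
    have h4 : lb ^ (s m) ≤ r m := hs_le m
    have hlb0 : (0:ℝ) < lb := by norm_num
    nlinarith
  -- definitions
  set S' : I → Set (EuclideanSpace ℝ (Fin (n+1))) :=
    fun i => Γ ∩ Metric.closedBall (y i) (Cs * r i/4) with hS'def
  clear_value S'
  have hS'meas : ∀ i, MeasurableSet (S' i) := by
    intro i; rw [hS'def]; exact hΓm.inter measurableSet_closedBall
  set t : I → ℝ≥0∞ := fun i => μ (P i) with htdef
  clear_value t
  set β : I → ℝ≥0∞ := fun i => ENNReal.ofReal (c₅/2 * r i^n) with hβdef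
  clear_value β
  have hβpos : ∀ i, 0 < β i := by
    intro i
    simp only [hβdef]
    exact ENNReal.ofReal_pos.mpr (mul_pos (half_pos hc₅) (pow_pos (hr i) n))
  have hβtop : ∀ i, β i ≠ ∞ := by intro i; simp only [hβdef]; exact ENNReal.ofReal_ne_top
  set p : I → EuclideanSpace ℝ (Fin (n+1)) → ℝ≥0∞ :=
    fun i => (S' i).indicator (fun _ => t i / β i) with hpdef
  clear_value p
  have hpmeas : ∀ i, Measurable (p i) := by
    intro i; rw [hpdef]; exact measurable_const.indicator (hS'meas i)
  set L : ℝ≥0∞ := ENNReal.ofReal (M * Θ) with hLdef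
  clear_value L
  have hL0 : L ≠ 0 := by
    simp only [hLdef, ne_eq, ENNReal.ofReal_eq_zero, not_le]
    exact mul_pos hM hΘ
  have hLtop : L ≠ ∞ := by simp only [hLdef]; exact ENNReal.ofReal_ne_top
  set q : I → I → EuclideanSpace ℝ (Fin (n+1)) → ℝ≥0∞ :=
    fun m k => if s k ≤ s m then p k else fun _ => 0 with hqdef
  clear_value q
  have hqmeas : ∀ m k, Measurable (q m k) := by
    intro m k
    by_cases h : s k ≤ s m
    · simp only [hqdef, if_pos h]; exact hpmeas k
    · simp only [hqdef, if_neg h]; exact measurable_const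
  set Φ : I → EuclideanSpace ℝ (Fin (n+1)) → ℝ≥0∞ :=
    fun m z => ∑' k, q m k z with hΦdef
  clear_value Φ
  have hΦmeas : ∀ m, Measurable (Φ m) := by
    intro m; rw [hΦdef]; exact Measurable.ennreal_tsum (hqmeas m)
  set Efn : I → Set (EuclideanSpace ℝ (Fin (n+1))) :=
    fun m => S' m ∩ {z | Φ m z ≤ L} with hEdef
  clear_value Efn
  have hEmeas : ∀ m, MeasurableSet (Efn m) := by
    intro m; rw [hEdef]
    exact (hS'meas m).inter (measurableSet_le (hΦmeas m) measurable_const)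
  -- mass bounds
  have ht_le : ∀ i, t i ≤ ENNReal.ofReal (Θ * r i^n) := by
    intro i
    simp only [htdef]
    refine le_trans (measure_mono (subset_trans (hPB i) (ball_subset_ball ?_))) (hpack i)
    have h1 := mul_pos hCs0 (hr i)
    have h2 := mul_nonneg (sub_nonneg.mpr hCs) (hr i).le
    nlinarith
  have ht_top : ∀ i, t i ≠ ∞ := fun i => (lt_of_le_of_lt (ht_le i) ENNReal.ofReal_lt_top).ne
  -- ν(S') bounds
  have hS'low : ∀ i, ENNReal.ofReal (c₅ * r i ^ n) ≤ ν (S' i) := by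
    intro i
    have hrad : (0:ℝ) < Cs * r i/4 := by have := mul_pos hCs0 (hr i); linarith
    have h1 : ENNReal.ofReal (c₁ * (Cs * r i/4)^n) ≤ ν (ball (y i) (Cs * r i/4)) :=
      hlow (y i) _ (hyΓ i) hrad (hdiam4 i)
    have h2 : ν (ball (y i) (Cs * r i/4)) ≤ ν (S' i) := by
      rw [hνdef, Measure.restrict_apply measurableSet_ball, Measure.restrict_apply (hS'meas i),
        hS'def]
      refine measure_mono ?_
      intro z hz
      exact ⟨⟨hz.2, ball_subset_closedBall hz.1⟩, hz.2⟩
    refine le_trans (le_of_eq ?_) (le_trans h1 h2)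
    congr 1
    rw [hc₅def, show Cs * r i / 4 = (Cs/4) * r i by ring, mul_pow]
    ring
  have hS'up : ∀ i, ν (S' i) ≤ ENNReal.ofReal (cup * r i ^ n) := by
    intro i
    have h2 : ν (S' i) ≤ ν (ball (y i) (Cs * r i/3)) := by
      rw [hνdef, Measure.restrict_apply measurableSet_ball, Measure.restrict_apply (hS'meas i),
        hS'def]
      refine measure_mono ?_
      intro z hz
      refine ⟨?_, hz.2⟩
      have h3 := mem_closedBall.mp hz.1.2
      have h4 := mul_pos hCs0 (hr i)
      rw [mem_ball]
      linarith
    have h3 : ENNReal.ofReal (Cs * r i/3) < EMetric.diam Γ := by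
      refine lt_of_lt_of_le ?_ (hdiam i)
      rw [ENNReal.ofReal_lt_ofReal_iff (mul_pos (by linarith) (hr i))]
      have := mul_pos hCs0 (hr i)
      linarith
    have h4 := (hreg (y i) (hyΓ i) (Cs * r i/3)
      (by have := mul_pos hCs0 (hr i); linarith) h3).2
    refine le_trans h2 (le_trans h4 (le_of_eq ?_))
    congr 1
    rw [hcupdef, show Cs * r i / 3 = (Cs/3) * r i by ring, mul_pow]
    ring
  have hS'top : ∀ i, ν (S' i) ≠ ∞ :=
    fun i => (lt_of_le_of_lt (hS'up i) ENNReal.ofReal_lt_top).ne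
  -- geometry: packing of smaller-scale neighbours
  have hgeom : ∀ m k, s k ≤ s m → (S' k ∩ S' m).Nonempty →
      P k ⊆ ball (x m) (3 * Cs * r m) := by
    intro m k hs hne'
    rw [hS'def] at hne'
    obtain ⟨w, hwk, hwm⟩ := hne'
    intro z hz
    have hz1 : dist z (x k) < r k := mem_ball.mp (hPB k hz)
    have h2 : dist (y k) (x k) < Cs/2 * r k := mem_ball.mp (hyb k)
    have h3 : dist w (y k) ≤ Cs * r k/4 := mem_closedBall.mp hwk.2
    have h4 : dist w (y m) ≤ Cs * r m/4 := mem_closedBall.mp hwm.2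
    have h5 : dist (y m) (x m) < Cs/2 * r m := mem_ball.mp (hyb m)
    have hrk : r k ≤ lb * r m := hscale k m hs
    rw [hlbdef] at hrk
    have hCrk : Cs * r k ≤ Cs * (4/3 * r m) := by
      have := mul_le_mul_of_nonneg_left hrk hCs0.le
      linarith
    have t1 : dist z (x m) ≤ dist z (x k) + dist (x k) (x m) := dist_triangle _ _ _
    have t2 : dist (x k) (x m) ≤ dist (x k) (y k) + dist (y k) w + dist w (x m) :=
      dist_triangle4 _ _ _ _
    have t3 : dist w (x m) ≤ dist w (y m) + dist (y m) (x m) := dist_triangle _ _ _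
    have e1 : dist (x k) (y k) = dist (y k) (x k) := dist_comm _ _
    have e2 : dist (y k) w = dist w (y k) := dist_comm _ _
    rw [mem_ball]
    have hh1 : (0:ℝ) ≤ (Cs - 2) * r m := mul_nonneg (sub_nonneg.mpr hCs) (hr m).le
    have hh2 : (0:ℝ) < Cs * r m := mul_pos hCs0 (hr m)
    nlinarith [hr k, hr m]
  -- packing mass bound
  have hKpack : ∀ m, (∑' (k : {k // s k ≤ s m ∧ (S' k ∩ S' m).Nonempty}), t k.1)
      ≤ ENNReal.ofReal (Θ * r m^n) := by
    intro m
    have hdisj : Pairwise (Function.onFun Disjoint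
        fun k : {k // s k ≤ s m ∧ (S' k ∩ S' m).Nonempty} => P k.1) := by
      intro a b hab
      exact hPd (Subtype.coe_ne_coe.mpr hab)
    have hmeas' : ∀ k : {k // s k ≤ s m ∧ (S' k ∩ S' m).Nonempty}, MeasurableSet (P k.1) :=
      fun k => hPm k.1
    have hcalc : (∑' (k : {k // s k ≤ s m ∧ (S' k ∩ S' m).Nonempty}), μ (P k.1))
        ≤ ENNReal.ofReal (Θ * r m^n) := by
      rw [← measure_iUnion hdisj hmeas']
      refine le_trans (measure_mono (iUnion_subset fun k => hgeom m k.1 k.2.1 k.2.2)) (hpack m)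
    simpa only [htdef] using hcalc
  -- flood integral bound
  have hΦint : ∀ m, (∫⁻ z in S' m, Φ m z ∂ν) ≤ ENNReal.ofReal (c₉ * (Θ * r m^n)) := by
    intro m
    have h1 : (∫⁻ z in S' m, Φ m z ∂ν) = ∑' k, ∫⁻ z in S' m, q m k z ∂ν := by
      simp only [hΦdef]
      exact lintegral_tsum fun k => (hqmeas m k).aemeasurable
    rw [h1]
    have hker : ∀ k, (∫⁻ z in S' m, q m k z ∂ν)
        ≤ (Set.indicator {k' | s k' ≤ s m ∧ (S' k' ∩ S' m).Nonempty} (fun k' => t k') k)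
            * ENNReal.ofReal c₉ := by
      intro k
      by_cases hsk : s k ≤ s m
      · have hq : q m k = p k := by rw [hqdef]; exact if_pos hsk
        rw [hq, hpdef]
        have h2 : (∫⁻ z in S' m, (S' k).indicator (fun _ => t k / β k) z ∂ν)
            = (t k / β k) * ν (S' k ∩ S' m) := by
          rw [lintegral_indicator_const (hS'meas k), Measure.restrict_apply (hS'meas k)]
        rw [h2]
        rcases (S' k ∩ S' m).eq_empty_or_nonempty with hem | hnem
        · rw [hem]; simp
        · have hkK : k ∈ {k' | s k' ≤ s m ∧ (S' k' ∩ S' m).Nonempty} := ⟨hsk, hnem⟩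
          rw [Set.indicator_of_mem hkK]
          have h3 : ν (S' k ∩ S' m) ≤ ENNReal.ofReal (cup * r k^n) :=
            le_trans (measure_mono inter_subset_left) (hS'up k)
          have h4 : ENNReal.ofReal (cup * r k^n) = ENNReal.ofReal c₉ * β k := by
            simp only [hβdef]
            rw [← ENNReal.ofReal_mul hc₉.le]
            congr 1
            rw [hc₉def]
            field_simp
          calc (t k / β k) * ν (S' k ∩ S' m)
              ≤ (t k / β k) * (ENNReal.ofReal c₉ * β k) :=
                mul_le_mul_right (le_trans h3 (le_of_eq h4)) _
            _ = (t k / β k * β k) * ENNReal.ofReal c₉ := by ring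
            _ = t k * ENNReal.ofReal c₉ := by
                rw [ENNReal.div_mul_cancel (hβpos k).ne' (hβtop k)]
      · have hq : q m k = fun _ => (0:ℝ≥0∞) := by rw [hqdef]; exact if_neg hsk
        rw [hq]
        simp
    calc (∑' k, ∫⁻ z in S' m, q m k z ∂ν)
        ≤ ∑' k, (Set.indicator {k' | s k' ≤ s m ∧ (S' k' ∩ S' m).Nonempty} (fun k' => t k') k)
            * ENNReal.ofReal c₉ := ENNReal.tsum_le_tsum hker
      _ = (∑' k, Set.indicator {k' | s k' ≤ s m ∧ (S' k' ∩ S' m).Nonempty} (fun k' => t k') k)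
            * ENNReal.ofReal c₉ := ENNReal.tsum_mul_right
      _ ≤ ENNReal.ofReal (Θ * r m^n) * ENNReal.ofReal c₉ := by
          refine mul_le_mul_left ?_ _
          rw [← tsum_subtype]
          exact hKpack m
      _ = ENNReal.ofReal (c₉ * (Θ * r m^n)) := by
          rw [← ENNReal.ofReal_mul (mul_pos hΘ (pow_pos (hr m) n)).le]
          congr 1
          ring
  -- the good sets have large measure
  have hEν : ∀ m, β m ≤ ν (Efn m) := by
    intro m
    have hcheb := mul_meas_ge_le_lintegral₀ (μ := ν.restrict (S' m)) (hΦmeas m).aemeasurable L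
    have hflset : MeasurableSet {z | L ≤ Φ m z} := measurableSet_le measurable_const (hΦmeas m)
    have hfl : ν ({z | L ≤ Φ m z} ∩ S' m) ≤ β m := by
      have h1 : L * ν ({z | L ≤ Φ m z} ∩ S' m) ≤ ENNReal.ofReal (c₉ * (Θ * r m^n)) := by
        rw [← Measure.restrict_apply hflset]
        exact le_trans hcheb (hΦint m)
      have h2 : ν ({z | L ≤ Φ m z} ∩ S' m) ≤ ENNReal.ofReal (c₉ * (Θ * r m^n)) / L := by
        rw [ENNReal.le_div_iff_mul_le (Or.inl hL0) (Or.inl hLtop), mul_comm]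
        exact h1
      refine le_trans h2 (le_of_eq ?_)
      have hre : (c₉ * (Θ * r m ^ n)) / (M * Θ) = c₅/2 * r m ^ n := by
        rw [hMdef]
        have h9 := hc₉.ne'
        have h5 := hc₅.ne'
        have hT := hΘ.ne'
        field_simp
      rw [hLdef, ← ENNReal.ofReal_div_of_pos (mul_pos hM hΘ), hre]
      simp only [hβdef]
    have hcover : ν (S' m) ≤ ν (Efn m) + ν ({z | L ≤ Φ m z} ∩ S' m) := by
      refine le_trans (measure_mono ?_) (measure_union_le _ _)
      intro z hz
      by_cases hΦz : Φ m z ≤ L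
      · exact Or.inl (by rw [hEdef]; exact ⟨hz, hΦz⟩)
      · exact Or.inr ⟨(not_le.mp hΦz).le, hz⟩
    have h2β : β m + β m ≤ ν (Efn m) + β m := by
      have he : β m + β m = ENNReal.ofReal (c₅ * r m ^ n) := by
        simp only [hβdef]
        rw [← ENNReal.ofReal_add (mul_pos (half_pos hc₅) (pow_pos (hr m) n)).le
          (mul_pos (half_pos hc₅) (pow_pos (hr m) n)).le]
        congr 1
        ring
      calc β m + β m = ENNReal.ofReal (c₅ * r m ^ n) := he
        _ ≤ ν (S' m) := hS'low m
        _ ≤ ν (Efn m) + ν ({z | L ≤ Φ m z} ∩ S' m) := hcover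
        _ ≤ ν (Efn m) + β m := add_le_add_right hfl _
    exact (ENNReal.add_le_add_iff_right (hβtop m)).mp h2β
  have hEsub : ∀ m, Efn m ⊆ S' m := by
    intro m; rw [hEdef]; exact inter_subset_left
  have hEup : ∀ m, ν (Efn m) ≠ ∞ := by
    intro m
    exact (lt_of_le_of_lt (le_trans (measure_mono (hEsub m)) (hS'up m))
      ENNReal.ofReal_lt_top).ne
  have hE0 : ∀ m, ν (Efn m) ≠ 0 := fun m => (lt_of_lt_of_le (hβpos m) (hEν m)).ne'
  -- the densities
  set G : I → EuclideanSpace ℝ (Fin (n+1)) → ℝ≥0∞ :=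
    fun i => (Efn i).indicator (fun _ => t i / ν (Efn i)) with hGdef
  clear_value G
  have hGmeas : ∀ i, Measurable (G i) := by
    intro i; rw [hGdef]; exact measurable_const.indicator (hEmeas i)
  have hGp : ∀ i z, G i z ≤ p i z := by
    intro i z
    simp only [hGdef, hpdef]
    by_cases hz : z ∈ Efn i
    · rw [Set.indicator_of_mem hz, Set.indicator_of_mem (hEsub i hz)]
      exact ENNReal.div_le_div_left (hEν i) _
    · rw [Set.indicator_of_notMem hz]
      exact zero_le
  have hGbound : ∀ i z, G i z ≤ ENNReal.ofReal (2/c₅ * Θ) := by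
    intro i z
    refine le_trans (hGp i z) ?_
    simp only [hpdef]
    by_cases hz : z ∈ S' i
    · rw [Set.indicator_of_mem hz]
      calc t i / β i ≤ ENNReal.ofReal (Θ * r i^n) / β i :=
            ENNReal.div_le_div_right (ht_le i) _
        _ = ENNReal.ofReal (2/c₅ * Θ) := by
            simp only [hβdef]
            rw [← ENNReal.ofReal_div_of_pos (mul_pos (half_pos hc₅) (pow_pos (hr i) n))]
            congr 1
            have hrn : (r i)^n ≠ 0 := (pow_pos (hr i) n).ne'
            field_simp
    · rw [Set.indicator_of_notMem hz]
      exact zero_le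
  have hGtop : ∀ i z, G i z ≠ ∞ :=
    fun i z => (lt_of_le_of_lt (hGbound i z) ENNReal.ofReal_lt_top).ne
  have hGint : ∀ i, (∫⁻ z, G i z ∂ν) = t i := by
    intro i
    simp only [hGdef]
    rw [lintegral_indicator_const (hEmeas i), ENNReal.div_mul_cancel (hE0 i) (hEup i)]
  -- the pointwise bound
  have hsum : ∀ z, (∑' i, G i z) ≤ ENNReal.ofReal ((M + 2/c₅) * Θ) := by
    intro z
    rw [ENNReal.tsum_eq_iSup_sum]
    refine iSup_le fun A => ?_
    have hAA' : ∑ k ∈ A, G k z = ∑ k ∈ A.filter (fun k => G k z ≠ 0), G k z :=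
      (Finset.sum_filter_ne_zero A).symm
    rw [hAA']
    set A' := A.filter (fun k => G k z ≠ 0) with hA'def
    rcases A'.eq_empty_or_nonempty with hA' | hA'
    · rw [hA']
      simp
    · obtain ⟨m, hmA, hmax⟩ := A'.exists_max_image s hA'
      have hGm0 : G m z ≠ 0 := (Finset.mem_filter.mp hmA).2
      have hzE : z ∈ Efn m := by
        by_contra h
        refine hGm0 ?_
        rw [hGdef]
        exact Set.indicator_of_notMem h _
      have hΦz : Φ m z ≤ L := by
        rw [hEdef] at hzE
        exact hzE.2
      have hsum2 : ∑ k ∈ A'.erase m, G k z ≤ L := by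
        refine le_trans ?_ hΦz
        rw [hΦdef]
        refine le_trans (Finset.sum_le_sum (fun k hk => ?_)) (ENNReal.sum_le_tsum _)
        have hkA' : k ∈ A' := Finset.mem_of_mem_erase hk
        have hsk : s k ≤ s m := hmax k hkA'
        refine le_trans (hGp k z) (le_of_eq ?_)
        simp only [hqdef]
        rw [if_pos hsk]
      calc ∑ k ∈ A', G k z = G m z + ∑ k ∈ A'.erase m, G k z :=
            (Finset.add_sum_erase _ _ hmA).symm
        _ ≤ ENNReal.ofReal (2/c₅ * Θ) + L := add_le_add (hGbound m z) hsum2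
        _ = ENNReal.ofReal ((M + 2/c₅) * Θ) := by
            rw [hLdef, ← ENNReal.ofReal_add (mul_pos (div_pos two_pos hc₅) hΘ).le
              (mul_pos hM hΘ).le]
            congr 1
            ring
  -- final packaging
  refine ⟨fun i z => (G i z).toReal, ?_, ?_, ?_, ?_, ?_⟩
  · exact fun i => (hGmeas i).ennreal_toReal
  · exact fun i z => ENNReal.toReal_nonneg
  · intro i z hz
    have hz' : (G i z).toReal ≠ 0 := hz
    have hG0 : G i z ≠ 0 := by
      intro h
      exact hz' (by rw [h]; simp)
    have hzE : z ∈ Efn i := by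
      by_contra h
      refine hG0 ?_
      rw [hGdef]
      exact Set.indicator_of_notMem h _
    have hzS : z ∈ S' i := hEsub i hzE
    rw [hS'def] at hzS
    refine ⟨hzS.1, subset_closure ?_⟩
    rw [mem_ball]
    have h1 : dist z (y i) ≤ Cs * r i/4 := mem_closedBall.mp hzS.2
    have h2 : dist (y i) (x i) < Cs/2 * r i := mem_ball.mp (hyb i)
    have h3 := dist_triangle z (y i) (x i)
    have h4 := mul_pos hCs0 (hr i)
    linarith
  · intro i
    show (∫⁻ z, ENNReal.ofReal ((G i z).toReal) ∂ν) = μ (P i)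
    have heq : (∫⁻ z, ENNReal.ofReal ((G i z).toReal) ∂ν) = ∫⁻ z, G i z ∂ν :=
      lintegral_congr fun z => ENNReal.ofReal_toReal (hGtop i z)
    rw [heq, hGint i]
    simp only [htdef]
  · refine Filter.Eventually.of_forall fun z => ?_
    show (∑' i, ENNReal.ofReal ((G i z).toReal)) ≤ ENNReal.ofReal ((M + 2/c₅) * Θ)
    have heq : ∀ i, ENNReal.ofReal ((G i z).toReal) = G i z :=
      fun i => ENNReal.ofReal_toReal (hGtop i z)
    calc (∑' i, ENNReal.ofReal ((G i z).toReal)) = ∑' i, G i z := tsum_congr heq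
      _ ≤ ENNReal.ofReal ((M + 2/c₅) * Θ) := hsum z

end
end
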